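/- Linear optimal feedback law: for every z ∈ ℝⁿ, the unique minimizer of u ↦ J(z,u) is u*(z) = −Kz, where K := (R + DᵀPD)⁻¹DᵀPMA; that is, J(z, −Kz) ≤ J(z,u) for all u ∈ ℝᵐ, with equality only when u = −Kz. -/

import Mathlib

open Matrix

private lemma dot_swap {n m : ℕ} (E : Matrix (Fin n) (Fin m) ℝ) (x : Fin m → ℝ)
    (y : Fin n → ℝ) : (E *ᵥ x) ⬝ᵥ y = x ⬝ᵥ (Eᵀ *ᵥ y) := by
  rw [dotProduct_comm, dotProduct_mulVec, dotProduct_comm, mulVec_transpose]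

private lemma dot_symm {k : ℕ} {P : Matrix (Fin k) (Fin k) ℝ} (hP : Pᵀ = P)
    (x y : Fin k → ℝ) : x ⬝ᵥ (P *ᵥ y) = y ⬝ᵥ (P *ᵥ x) := by
  rw [dotProduct_mulVec, ← mulVec_transpose, hP, dotProduct_comm]

theorem optimal_feedback {n m p : ℕ}
    (A : Matrix (Fin n) (Fin n) ℝ) (B : Matrix (Fin n) (Fin m) ℝ)
    (C : Matrix (Fin n) (Fin p) ℝ) (G : Matrix (Fin p) (Fin n) ℝ)
    (hGC : IsUnit (G * C))
    (M : Matrix (Fin n) (Fin n) ℝ)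
    (hM : M = 1 - C * (G * C)⁻¹ * G)
    (D : Matrix (Fin n) (Fin m) ℝ)
    (hD : D = B - C * (G * C)⁻¹ * (G * B))
    (Q : Matrix (Fin n) (Fin n) ℝ) (hQ : Q.PosSemidef)
    (R : Matrix (Fin m) (Fin m) ℝ) (hR : R.PosDef)
    (P : Matrix (Fin n) (Fin n) ℝ) (hP : P.PosSemidef)
    (J : (Fin n → ℝ) → (Fin m → ℝ) → ℝ)
    (hJ : J = fun z u =>
      (1 / 2) * (z ⬝ᵥ (Q *ᵥ z) + u ⬝ᵥ (R *ᵥ u) +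
        (M *ᵥ (A *ᵥ z + B *ᵥ u)) ⬝ᵥ (P *ᵥ (M *ᵥ (A *ᵥ z + B *ᵥ u)))))
    (K : Matrix (Fin m) (Fin n) ℝ)
    (hK : K = (R + Dᵀ * P * D)⁻¹ * (Dᵀ * P * M * A)) :
    ∀ (z : Fin n → ℝ) (u : Fin m → ℝ),
      J z (-(K *ᵥ z)) ≤ J z u ∧ (J z (-(K *ᵥ z)) = J z u → u = -(K *ᵥ z)) := by
  have hPt : Pᵀ = P := by simpa using hP.1.eq
  have hRt : Rᵀ = R := by simpa using hR.1.eq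
  have hDPD : (Dᵀ * P * D).PosSemidef := by
    simpa using hP.conjTranspose_mul_mul_same D
  have hDPDt : (Dᵀ * P * D)ᵀ = Dᵀ * P * D := by simpa [hPt, Matrix.mul_assoc] using hDPD.1
  have hS : (R + Dᵀ * P * D).PosDef := hR.add_posSemidef hDPD
  have hSK : (R + Dᵀ * P * D) * K = Dᵀ * P * M * A := by
    rw [hK, ← Matrix.mul_assoc,
      Matrix.mul_nonsing_inv _ ((Matrix.isUnit_iff_isUnit_det _).mp hS.isUnit), Matrix.one_mul]
  have hMB : M * B = D := by
    rw [hM, hD, Matrix.sub_mul, Matrix.one_mul, Matrix.mul_assoc]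
  intro z u
  set v := K *ᵥ z with hv
  set a := M *ᵥ (A *ᵥ z) with ha
  have hw : ∀ x : Fin m → ℝ, M *ᵥ (A *ᵥ z + B *ᵥ x) = a + D *ᵥ x := by
    intro x
    have h2 : M *ᵥ (B *ᵥ x) = D *ᵥ x := by rw [mulVec_mulVec, hMB]
    rw [mulVec_add, h2]
  have h1 : Dᵀ *ᵥ (P *ᵥ a) = (R + Dᵀ * P * D) *ᵥ v := by
    rw [ha, hv]
    simp only [mulVec_mulVec]
    congr 1
    rw [hSK]
    simp only [Matrix.mul_assoc]
  have hkey : ∀ x : Fin m → ℝ,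
      (D *ᵥ x) ⬝ᵥ (P *ᵥ a) = x ⬝ᵥ (R *ᵥ v) + x ⬝ᵥ ((Dᵀ * P * D) *ᵥ v) := by
    intro x
    rw [dot_swap, h1, add_mulVec, dotProduct_add]
  have hDPDdot : ∀ x y : Fin m → ℝ,
      (D *ᵥ x) ⬝ᵥ (P *ᵥ (D *ᵥ y)) = x ⬝ᵥ ((Dᵀ * P * D) *ᵥ y) := by
    intro x y
    rw [dot_swap, mulVec_mulVec, mulVec_mulVec]
  have hmain : J z u = J z (-v) + (1 / 2) * ((u + v) ⬝ᵥ ((R + Dᵀ * P * D) *ᵥ (u + v))) := by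
    simp only [hJ]
    rw [hw u, hw (-v)]
    simp only [mulVec_neg, mulVec_add, dotProduct_add, add_dotProduct, dotProduct_neg,
      neg_dotProduct, add_mulVec, neg_neg, hDPDdot, hkey, dot_symm hPt a]
    have e1 : v ⬝ᵥ R *ᵥ u = u ⬝ᵥ R *ᵥ v := dot_symm hRt v u
    have e2 : v ⬝ᵥ (Dᵀ * P * D) *ᵥ u = u ⬝ᵥ (Dᵀ * P * D) *ᵥ v := dot_symm hDPDt v u
    linarith
  constructor
  · rw [hmain]
    have h := hS.posSemidef.dotProduct_mulVec_nonneg (u + v)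
    simp only [star_trivial] at h
    linarith
  · intro h
    rw [hmain] at h
    have h0 : (u + v) ⬝ᵥ ((R + Dᵀ * P * D) *ᵥ (u + v)) = 0 := by linarith
    by_contra hne
    have huv : u + v ≠ 0 := fun hc => hne (eq_neg_of_add_eq_zero_left hc)
    have h2 := hS.dotProduct_mulVec_pos huv
    simp only [star_trivial] at h2
    rw [h0] at h2
    exact lt_irrefl _ h2
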